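/- Let T_r^min denote the set of lines in ℝ^d with rational direction (direction z/|z| for some nonzero z ∈ ℤ^d) containing at least two lattice points of B_r ∩ ℤ^d. Then #T_r^min = Θ(r^{2d}) as r → ∞; i.e., there exist C_1, C_2 > 0 with C_1 r^{2d} < #T_r^min < C_2 r^{2d} for large r. -/

import Mathlib

open RealInnerProductSpace

noncomputable def L (d : ℕ) (z : Fin d → ℤ) : EuclideanSpace ℝ (Fin d) := WithLp.toLp 2 (fun i => (z i : ℝ))

def Tmin (d : ℕ) (r : ℝ) : Set (Set (EuclideanSpace ℝ (Fin d))) :=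
  {s | ∃ (x : EuclideanSpace ℝ (Fin d)) (z : Fin d → ℤ), z ≠ 0 ∧
        s = {y | ∃ t : ℝ, y = x + t • L d z} ∧
        ∃ y y' : Fin d → ℤ, y ≠ y' ∧ L d y ∈ s ∧ L d y' ∈ s ∧ ‖L d y‖ ≤ r ∧ ‖L d y'‖ ≤ r}



lemma L_app (d : ℕ) (z : Fin d → ℤ) (i : Fin d) : L d z i = (z i : ℝ) := rfl

lemma L_add (d : ℕ) (y z : Fin d → ℤ) : L d (y + z) = L d y + L d z := by
  ext i
  simp [L, PiLp.add_apply]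

lemma L_inj (d : ℕ) {y z : Fin d → ℤ} (h : L d y = L d z) : y = z := by
  funext i
  have := congrArg (fun v => v i) h
  simpa [L] using this

lemma L_ne_zero (d : ℕ) {z : Fin d → ℤ} (h : z ≠ 0) : L d z ≠ 0 := by
  intro hz
  apply h
  funext i
  have := congrArg (fun v => v i) hz
  simpa [L] using this

-- norm bounds
lemma abs_le_norm_L (d : ℕ) (z : Fin d → ℤ) (i : Fin d) : |(z i : ℝ)| ≤ ‖L d z‖ := by
  rw [EuclideanSpace.norm_eq]
  have h1 : |(z i : ℝ)| = Real.sqrt (|(z i : ℝ)|^2) := by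
    rw [Real.sqrt_sq_eq_abs, abs_abs]
  rw [h1]
  apply Real.sqrt_le_sqrt
  have he : |(z i:ℝ)|^2 = ‖L d z i‖^2 := by
    rw [L_app, Real.norm_eq_abs]
  rw [he]
  exact Finset.single_le_sum (f := fun j => ‖L d z j‖^2) (fun j _ => by positivity) (Finset.mem_univ i)

lemma norm_L_le (d : ℕ) (z : Fin d → ℤ) (m : ℝ) (hm : 0 ≤ m) (h : ∀ i, |(z i : ℝ)| ≤ m) :
    ‖L d z‖ ≤ d * m := by
  rw [EuclideanSpace.norm_eq]
  have h1 : (∑ i : Fin d, ‖L d z i‖^2) ≤ ∑ _i : Fin d, m^2 := by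
    apply Finset.sum_le_sum
    intro i _
    have := h i
    have : ‖L d z i‖ ≤ m := by simpa [L_app, Real.norm_eq_abs] using h i
    exact pow_le_pow_left₀ (norm_nonneg _) this 2
  have h2 : (∑ _i : Fin d, m^2) = d * m^2 := by simp [Finset.sum_const, nsmul_eq_mul]
  have h3 : Real.sqrt (∑ i : Fin d, ‖L d z i‖^2) ≤ Real.sqrt ((d:ℝ) * m^2) := by
    apply Real.sqrt_le_sqrt; rw [← h2]; exact h1
  refine h3.trans ?_
  have h4 : (d:ℝ) * m^2 ≤ (d*m)^2 := by
    have : (d:ℝ) ≤ (d:ℝ)^2 := by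
      rcases Nat.eq_zero_or_pos d with h|h
      · simp [h]
      · have h1 : (1:ℝ) ≤ (d:ℝ) := by exact_mod_cast h
        nlinarith
    nlinarith [sq_nonneg m]
  calc Real.sqrt ((d:ℝ)*m^2) ≤ Real.sqrt ((d*m)^2) := Real.sqrt_le_sqrt h4
    _ = d*m := Real.sqrt_sq (by positivity)

-- line through two points
lemma line_eq {V : Type*} [AddCommGroup V] [Module ℝ V] (x v A B : V)
    (hA : ∃ t : ℝ, A = x + t • v) (hB : ∃ t : ℝ, B = x + t • v) (hAB : A ≠ B) :
    {P : V | ∃ t : ℝ, P = x + t • v} = {P : V | ∃ t : ℝ, P = A + t • (B - A)} := by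
  obtain ⟨t₀, hA⟩ := hA
  obtain ⟨t₁, hB⟩ := hB
  have hne : t₁ - t₀ ≠ 0 := by
    intro h
    apply hAB
    have : t₁ = t₀ := by linarith [sub_eq_zero.mp h]
    rw [hA, hB, this]
  have hBA : B - A = (t₁ - t₀) • v := by rw [hA, hB]; module
  ext P
  constructor
  · rintro ⟨t, rfl⟩
    refine ⟨(t - t₀)/(t₁ - t₀), ?_⟩
    rw [hBA, smul_smul, div_mul_cancel₀ _ hne, hA]
    module
  · rintro ⟨u, rfl⟩
    refine ⟨t₀ + u * (t₁ - t₀), ?_⟩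
    rw [hBA, hA]
    module


-- telescoping: sum over Icc m n of 1/k^2 <= 1/(m-1)
lemma sum_inv_sq_le (m n : ℕ) (hm : 2 ≤ m) :
    (∑ k ∈ Finset.Icc m n, (1:ℝ)/(k:ℝ)^2) ≤ 1/((m:ℝ)-1) := by
  have key : ∀ k ∈ Finset.Icc m n, (1:ℝ)/(k:ℝ)^2 ≤ 1/((k:ℝ)-1) - 1/(k:ℝ) := by
    intro k hk
    have hk2 : 2 ≤ k := hm.trans (Finset.mem_Icc.mp hk).1
    have hk2' : (2:ℝ) ≤ (k:ℝ) := by exact_mod_cast hk2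
    rw [div_sub_div _ _ (by linarith) (by linarith)]
    rw [div_le_div_iff₀ (by positivity) (by nlinarith)]
    nlinarith
  have h1 := Finset.sum_le_sum key
  refine h1.trans ?_
  -- telescoping
  rcases le_or_gt m n with h | h
  · rw [show Finset.Icc m n = Finset.Ico m (n+1) by rw [Finset.Ico_add_one_right_eq_Icc]]
    rw [Finset.sum_Ico_eq_sum_range]
    have : ∀ j, (1:ℝ)/((m+j:ℕ):ℝ) - 1/(((m+j:ℕ)):ℝ) = 0 := by intro j; ring
    have he : (∑ j ∈ Finset.range (n+1-m), ((1:ℝ)/(((m+j:ℕ)):ℝ)-1) ) = 0 → True := fun _ => trivial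
    have : (∑ j ∈ Finset.range (n+1-m), ((1:ℝ)/(((m+j:ℕ):ℝ)-1) - 1/((m+j:ℕ):ℝ)))
        = (fun j => (1:ℝ)/(((m+j:ℕ):ℝ)-1)) 0 - (fun j => (1:ℝ)/(((m+j:ℕ):ℝ)-1)) (n+1-m) := by
      rw [← Finset.sum_range_sub' (fun j => (1:ℝ)/(((m+j:ℕ):ℝ)-1))]
      apply Finset.sum_congr rfl
      intro j _
      have : ((m + (j+1) : ℕ) : ℝ) - 1 = ((m+j:ℕ):ℝ) := by push_cast; ring
      rw [this]
    rw [this]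
    simp only []
    have hmn : (0:ℝ) ≤ 1/(((m+(n+1-m):ℕ):ℝ)-1) := by
      have : (2:ℝ) ≤ ((m+(n+1-m):ℕ):ℝ) := by
        have : 2 ≤ m + (n+1-m) := le_add_right hm
        exact_mod_cast this
      apply div_nonneg zero_le_one; linarith
    have : ((m + 0 : ℕ):ℝ) = (m:ℝ) := by norm_num
    rw [this]
    linarith
  · rw [Finset.Icc_eq_empty (by omega)]
    simp
    omega



lemma card_multiples (k a b : ℤ) (hk : 0 < k) :
    ((Finset.Ioc a b).filter fun x => k ∣ x).card = (b/k - a/k).toNat := by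
  have him : (Finset.Ioc a b).filter (fun x => k ∣ x)
      = Finset.image (fun j => k * j) (Finset.Ioc (a/k) (b/k)) := by
    ext x
    simp only [Finset.mem_filter, Finset.mem_Ioc, Finset.mem_image]
    constructor
    · rintro ⟨⟨hax, hxb⟩, ⟨j, rfl⟩⟩
      refine ⟨j, ⟨?_, ?_⟩, rfl⟩
      · rw [Int.ediv_lt_iff_lt_mul hk]; linarith [mul_comm k j]
      · rw [Int.le_ediv_iff_mul_le hk]; linarith [mul_comm k j]
    · rintro ⟨j, ⟨haj, hjb⟩, rfl⟩
      refine ⟨⟨?_, ?_⟩, ⟨j, rfl⟩⟩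
      · have := (Int.ediv_lt_iff_lt_mul hk).mp haj; linarith [mul_comm k j]
      · have := (Int.le_ediv_iff_mul_le hk).mp hjb; linarith [mul_comm k j]
  rw [him, Finset.card_image_of_injective _ (mul_right_injective₀ hk.ne'), Int.card_Ioc]

lemma ediv_real_le (a k : ℤ) (hk : 0 < k) : ((a/k : ℤ) : ℝ) ≤ (a:ℝ)/(k:ℝ) := by
  rw [le_div_iff₀ (by exact_mod_cast hk)]
  exact_mod_cast Int.ediv_mul_le a hk.ne'

lemma ediv_real_gt (a k : ℤ) (hk : 0 < k) : (a:ℝ)/(k:ℝ) - 1 < ((a/k : ℤ) : ℝ) := by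
  have h := Int.lt_ediv_add_one_mul_self a hk
  have h' : (a:ℝ) < ((a/k:ℤ):ℝ) * (k:ℝ) + (k:ℝ) := by
    have h2 : ((a:ℤ):ℝ) < (((a/k + 1) * k : ℤ):ℝ) := by exact_mod_cast h
    push_cast at h2
    nlinarith
  have hk' : (0:ℝ) < (k:ℝ) := by exact_mod_cast hk
  rw [div_sub_one hk'.ne', div_lt_iff₀ hk']
  linarith

noncomputable def Cfin (n : ℕ) : Finset (ℤ×ℤ) :=
  ((Finset.Ioc (n:ℤ) (2*n)) ×ˢ (Finset.Ioc (0:ℤ) (n:ℤ))).filter fun p => Int.gcd p.1 p.2 = 1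

set_option maxHeartbeats 1000000 in
lemma Cfin_card (n : ℕ) (hn : 50 ≤ n) : (0.1:ℝ) * (n:ℝ)^2 ≤ ((Cfin n).card : ℝ) := by
  set B := (Finset.Ioc (n:ℤ) (2*n)) ×ˢ (Finset.Ioc (0:ℤ) (n:ℤ)) with hB
  have hBcard : B.card = n * n := by
    rw [Finset.card_product, Int.card_Ioc, Int.card_Ioc]
    norm_num
    congr 1
    omega
  set Bad := B.filter (fun p => ¬ Int.gcd p.1 p.2 = 1) with hBad
  have hsplit : (Cfin n).card + Bad.card = n * n := by
    rw [← hBcard, Cfin, hBad, ← hB]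
    exact Finset.card_filter_add_card_filter_not _
  -- Bad is covered by divisibility classes
  have hsub : Bad ⊆ (Finset.Icc 2 n).biUnion
      (fun k => B.filter fun p => (k:ℤ) ∣ p.1 ∧ (k:ℤ) ∣ p.2) := by
    intro p hp
    rw [hBad, Finset.mem_filter] at hp
    obtain ⟨hpB, hg⟩ := hp
    rw [hB, Finset.mem_product, Finset.mem_Ioc, Finset.mem_Ioc] at hpB
    set g := Int.gcd p.1 p.2 with hgdef
    have hp1 : (0:ℤ) < p.1 := lt_of_le_of_lt (by positivity) hpB.1.1
    have hg0 : g ≠ 0 := by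
      intro h
      have h2 := (Int.gcd_eq_zero_iff.mp h).1
      omega
    have hg2 : 2 ≤ g := by omega
    have hgn : g ≤ n := by
      have h1 : (g:ℤ) ∣ p.2 := Int.gcd_dvd_right _ _
      have h2 : (g:ℤ) ≤ p.2 := Int.le_of_dvd hpB.2.1 h1
      have : (g:ℤ) ≤ (n:ℤ) := h2.trans hpB.2.2
      exact_mod_cast this
    rw [Finset.mem_biUnion]
    exact ⟨g, Finset.mem_Icc.mpr ⟨hg2, hgn⟩, Finset.mem_filter.mpr
      ⟨(by exact Finset.mem_product.mpr ⟨Finset.mem_Ioc.mpr hpB.1, Finset.mem_Ioc.mpr hpB.2⟩), Int.gcd_dvd_left _ _, Int.gcd_dvd_right _ _⟩⟩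
  -- per-k bound
  have hperk : ∀ k ∈ Finset.Icc 2 n,
      ((B.filter fun p => (k:ℤ) ∣ p.1 ∧ (k:ℤ) ∣ p.2).card : ℝ)
        ≤ (n:ℝ)^2/(k:ℝ)^2 + (n:ℝ)/(k:ℝ) := by
    intro k hk
    obtain ⟨hk2, hkn⟩ := Finset.mem_Icc.mp hk
    have hkz : (0:ℤ) < (k:ℤ) := by exact_mod_cast (by omega : 0 < k)
    have hkr : (0:ℝ) < (k:ℝ) := by exact_mod_cast (by omega : 0 < k)
    rw [hB, Finset.filter_product, Finset.card_product]
    rw [card_multiples _ _ _ hkz, card_multiples _ _ _ hkz]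
    have h1 : (0:ℤ) ≤ 2*(n:ℤ)/(k:ℤ) - (n:ℤ)/(k:ℤ) := by
      have := Int.ediv_le_ediv hkz (by linarith : (n:ℤ) ≤ 2*(n:ℤ))
      linarith
    have h2 : (0:ℤ) ≤ (n:ℤ)/(k:ℤ) - 0/(k:ℤ) := by
      rw [Int.zero_ediv, sub_zero]
      exact Int.ediv_nonneg (by positivity) hkz.le
    have e1 : (((2*(n:ℤ)/(k:ℤ) - (n:ℤ)/(k:ℤ)).toNat : ℕ) : ℝ)
        = ((2*(n:ℤ)/(k:ℤ) : ℤ):ℝ) - (((n:ℤ)/(k:ℤ) : ℤ):ℝ) := by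
      rw [← Int.cast_natCast, Int.toNat_of_nonneg h1]
      push_cast
      ring
    have e2 : ((((n:ℤ)/(k:ℤ) - 0/(k:ℤ)).toNat : ℕ) : ℝ) = (((n:ℤ)/(k:ℤ) : ℤ):ℝ) := by
      rw [← Int.cast_natCast, Int.toNat_of_nonneg h2]
      push_cast [Int.zero_ediv]
      ring
    push_cast
    rw [e1, e2]
    have b1 := ediv_real_le (2*(n:ℤ)) (k:ℤ) hkz
    have b2 := ediv_real_gt (n:ℤ) (k:ℤ) hkz
    have b3 := ediv_real_le (n:ℤ) (k:ℤ) hkz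
    have b4 : (0:ℝ) ≤ (((n:ℤ)/(k:ℤ) : ℤ):ℝ) := by exact_mod_cast Int.ediv_nonneg (by positivity : (0:ℤ) ≤ (n:ℤ)) hkz.le
    push_cast at b1 b2 b3
    have hm1 : ((2*(n:ℤ)/(k:ℤ) : ℤ):ℝ) - (((n:ℤ)/(k:ℤ) : ℤ):ℝ) ≤ (n:ℝ)/(k:ℝ) + 1 := by
      have : (2*(n:ℝ))/(k:ℝ) = (n:ℝ)/(k:ℝ) + (n:ℝ)/(k:ℝ) := by ring
      nlinarith
    have hm2 : (((n:ℤ)/(k:ℤ) : ℤ):ℝ) ≤ (n:ℝ)/(k:ℝ) := b3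
    have expand : (n:ℝ)^2/(k:ℝ)^2 + (n:ℝ)/(k:ℝ) = ((n:ℝ)/(k:ℝ) + 1) * ((n:ℝ)/(k:ℝ)) := by
      field_simp
    rw [expand]
    nlinarith
  -- total bound on Bad
  have hbad1 : (Bad.card : ℝ) ≤ ∑ k ∈ Finset.Icc 2 n,
      ((B.filter fun p => (k:ℤ) ∣ p.1 ∧ (k:ℤ) ∣ p.2).card : ℝ) := by
    have h1 := Finset.card_le_card hsub
    have h2 := Finset.card_biUnion_le (s := Finset.Icc 2 n)
      (t := fun k => B.filter fun p => (k:ℤ) ∣ p.1 ∧ (k:ℤ) ∣ p.2)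
    have := h1.trans h2
    exact_mod_cast this
  have hbad2 : (Bad.card : ℝ) ≤ ∑ k ∈ Finset.Icc 2 n, ((n:ℝ)^2/(k:ℝ)^2 + (n:ℝ)/(k:ℝ)) :=
    hbad1.trans (Finset.sum_le_sum hperk)
  -- split the sum
  have hsq : ∑ k ∈ Finset.Icc 2 n, (n:ℝ)^2/(k:ℝ)^2 ≤ (n:ℝ)^2 * (1/4 + 1/9 + 1/3) := by
    have h1 : ∑ k ∈ Finset.Icc 2 n, (n:ℝ)^2/(k:ℝ)^2
        = (n:ℝ)^2 * ∑ k ∈ Finset.Icc 2 n, (1:ℝ)/(k:ℝ)^2 := by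
      rw [Finset.mul_sum]
      apply Finset.sum_congr rfl
      intro k _
      ring
    rw [h1]
    have h2 : ∑ k ∈ Finset.Icc 2 n, (1:ℝ)/(k:ℝ)^2 ≤ 1/4 + 1/9 + 1/3 := by
      have hsplit2 : Finset.Icc 2 n = Finset.Ioc 1 n := by ext x; simp; omega
      have hcons := Finset.sum_Ioc_consecutive (f := fun k : ℕ => (1:ℝ)/(k:ℝ)^2)
        (by omega : (1:ℕ) ≤ 3) (by omega : (3:ℕ) ≤ n)
      rw [hsplit2, ← hcons]
      have hA : ∑ k ∈ Finset.Ioc (1:ℕ) 3, (1:ℝ)/(k:ℝ)^2 = 1/4 + 1/9 := by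
        have : Finset.Ioc (1:ℕ) 3 = {2, 3} := by decide
        rw [this]
        norm_num
      have hBB : ∑ k ∈ Finset.Ioc (3:ℕ) n, (1:ℝ)/(k:ℝ)^2 ≤ 1/3 := by
        have he : Finset.Ioc (3:ℕ) n = Finset.Icc 4 n := by ext x; simp; omega
        rw [he]
        have h7 := sum_inv_sq_le 4 n (by omega)
        have : ((4:ℕ):ℝ) - 1 = 3 := by norm_num
        rw [this] at h7
        linarith
      linarith
    have := mul_le_mul_of_nonneg_left h2 (by positivity : (0:ℝ) ≤ (n:ℝ)^2)
    linarith
  have hlin : ∑ k ∈ Finset.Icc 2 n, (n:ℝ)/(k:ℝ) ≤ 4.5*(n:ℝ) + (n:ℝ)^2/10 := by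
    have hsplit2 : Finset.Icc 2 n = Finset.Ioc 1 n := by ext x; simp; omega
    have hcons := Finset.sum_Ioc_consecutive (f := fun k : ℕ => (n:ℝ)/(k:ℝ))
      (by omega : (1:ℕ) ≤ 10) (by omega : (10:ℕ) ≤ n)
    rw [hsplit2, ← hcons]
    have hA : ∑ k ∈ Finset.Ioc (1:ℕ) 10, (n:ℝ)/(k:ℝ) ≤ 4.5*(n:ℝ) := by
      have hle : ∀ k ∈ Finset.Ioc (1:ℕ) 10, (n:ℝ)/(k:ℝ) ≤ (n:ℝ)/2 := by
        intro k hk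
        obtain ⟨h1, h2⟩ := Finset.mem_Ioc.mp hk
        apply div_le_div_of_nonneg_left (by positivity) (by norm_num)
        exact_mod_cast (by omega : 2 ≤ k)
      have := Finset.sum_le_sum hle
      have hc : ∑ _k ∈ Finset.Ioc (1:ℕ) 10, (n:ℝ)/2 = 9 * ((n:ℝ)/2) := by
        rw [Finset.sum_const]
        norm_num
      rw [hc] at this
      linarith
    have hBB : ∑ k ∈ Finset.Ioc (10:ℕ) n, (n:ℝ)/(k:ℝ) ≤ (n:ℝ)^2/10 := by
      have hle : ∀ k ∈ Finset.Ioc (10:ℕ) n, (n:ℝ)/(k:ℝ) ≤ (n:ℝ)^2/(k:ℝ)^2 := by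
        intro k hk
        obtain ⟨h1, h2⟩ := Finset.mem_Ioc.mp hk
        have hkr : (0:ℝ) < (k:ℝ) := by exact_mod_cast (by omega : 0 < k)
        have hkn : (k:ℝ) ≤ (n:ℝ) := by exact_mod_cast h2
        rw [div_le_div_iff₀ hkr (by positivity)]
        nlinarith [mul_le_mul_of_nonneg_left hkn (by positivity : (0:ℝ) ≤ (n:ℝ)*(k:ℝ))]
      have h3 := Finset.sum_le_sum hle
      refine h3.trans ?_
      have h4 : ∑ k ∈ Finset.Ioc (10:ℕ) n, (n:ℝ)^2/(k:ℝ)^2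
          = (n:ℝ)^2 * ∑ k ∈ Finset.Ioc (10:ℕ) n, (1:ℝ)/(k:ℝ)^2 := by
        rw [Finset.mul_sum]
        apply Finset.sum_congr rfl
        intro k _
        ring
      rw [h4]
      have h5 : Finset.Ioc (10:ℕ) n = Finset.Icc 11 n := by ext x; simp; omega
      rw [h5]
      have h6 := sum_inv_sq_le 11 n (by omega)
      have he : ((11:ℕ):ℝ) - 1 = 10 := by norm_num
      rw [he] at h6
      have := mul_le_mul_of_nonneg_left h6 (by positivity : (0:ℝ) ≤ (n:ℝ)^2)
      have he2 : (n:ℝ)^2 * (1/10) = (n:ℝ)^2/10 := by ring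
      linarith
    linarith
  -- conclude
  have hbadfinal : (Bad.card : ℝ) ≤ 0.9 * (n:ℝ)^2 := by
    have hn' : (50:ℝ) ≤ (n:ℝ) := by exact_mod_cast hn
    have : (Bad.card:ℝ) ≤ (n:ℝ)^2*(1/4+1/9+1/3) + 4.5*(n:ℝ) + (n:ℝ)^2/10 := by
      rw [Finset.sum_add_distrib] at hbad2
      linarith
    nlinarith [mul_nonneg (by linarith : (0:ℝ) ≤ (n:ℝ)-50) (by positivity : (0:ℝ) ≤ (n:ℝ))]
  have hC : ((Cfin n).card : ℝ) + (Bad.card:ℝ) = (n:ℝ)*(n:ℝ) := by exact_mod_cast hsplit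
  have he : (n:ℝ)*(n:ℝ) = (n:ℝ)^2 := by ring
  linarith





-- a line in Tmin is determined by two distinct lattice points on it
lemma Tmin_line {d : ℕ} {r : ℝ} {s : Set (EuclideanSpace ℝ (Fin d))} (hs : s ∈ Tmin d r)
    {A B : Fin d → ℤ} (hAB : A ≠ B) (hA : L d A ∈ s) (hB : L d B ∈ s) :
    s = {P | ∃ t : ℝ, P = L d A + t • (L d B - L d A)} := by
  obtain ⟨x, z, hz, hseq, -⟩ := hs
  rw [hseq] at hA hB ⊢
  exact line_eq x (L d z) (L d A) (L d B) hA hB (fun h => hAB (L_inj d h))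

open scoped Classical in
noncomputable def pick (d : ℕ) (r : ℝ) (s : Set (EuclideanSpace ℝ (Fin d))) :
    (Fin d → ℤ) × (Fin d → ℤ) :=
  if h : ∃ q : (Fin d → ℤ) × (Fin d → ℤ), q.1 ≠ q.2 ∧ L d q.1 ∈ s ∧ L d q.2 ∈ s ∧
      ‖L d q.1‖ ≤ r ∧ ‖L d q.2‖ ≤ r then h.choose else 0

lemma pick_spec {d : ℕ} {r : ℝ} {s : Set (EuclideanSpace ℝ (Fin d))} (hs : s ∈ Tmin d r) :
    (pick d r s).1 ≠ (pick d r s).2 ∧ L d (pick d r s).1 ∈ s ∧ L d (pick d r s).2 ∈ s ∧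
      ‖L d (pick d r s).1‖ ≤ r ∧ ‖L d (pick d r s).2‖ ≤ r := by
  obtain ⟨x, z, hz, hseq, y, y', hyy', h1, h2, h3, h4⟩ := hs
  have hex : ∃ q : (Fin d → ℤ) × (Fin d → ℤ), q.1 ≠ q.2 ∧ L d q.1 ∈ s ∧ L d q.2 ∈ s ∧
      ‖L d q.1‖ ≤ r ∧ ‖L d q.2‖ ≤ r := ⟨(y, y'), hyy', h1, h2, h3, h4⟩
  classical
  rw [pick]
  rw [dif_pos hex]
  exact hex.choose_spec

lemma injOn_pick (d : ℕ) (r : ℝ) : Set.InjOn (pick d r) (Tmin d r) := by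
  intro s hs s' hs' heq
  obtain ⟨h1, h2, h3, h4, h5⟩ := pick_spec hs
  obtain ⟨h1', h2', h3', h4', h5'⟩ := pick_spec hs'
  rw [Tmin_line hs h1 h2 h3, heq, ← Tmin_line hs' h1' h2' h3']

noncomputable def box (d : ℕ) (r : ℝ) : Finset (Fin d → ℤ) :=
  Fintype.piFinset fun _ => Finset.Icc (-⌈r⌉) ⌈r⌉

lemma pick_mem_box {d : ℕ} {r : ℝ} {s : Set (EuclideanSpace ℝ (Fin d))}
    (hs : s ∈ Tmin d r) : pick d r s ∈ box d r ×ˢ box d r := by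
  obtain ⟨h1, h2, h3, h4, h5⟩ := pick_spec hs
  rw [Finset.mem_product]
  constructor
  · rw [box, Fintype.mem_piFinset]
    intro i
    rw [Finset.mem_Icc, ← abs_le]
    have ha := (abs_le_norm_L d (pick d r s).1 i).trans (h4.trans (Int.le_ceil r))
    exact_mod_cast ha
  · rw [box, Fintype.mem_piFinset]
    intro i
    rw [Finset.mem_Icc, ← abs_le]
    have ha := (abs_le_norm_L d (pick d r s).2 i).trans (h5.trans (Int.le_ceil r))
    exact_mod_cast ha

lemma Tmin_finite (d : ℕ) (r : ℝ) : (Tmin d r).Finite := by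
  apply Set.Finite.of_finite_image (f := pick d r) ?_ (injOn_pick d r)
  apply Set.Finite.subset (box d r ×ˢ box d r).finite_toSet
  rintro q ⟨s, hs, rfl⟩
  exact pick_mem_box hs

lemma Tmin_ncard_le (d : ℕ) (r : ℝ) (hr : 3 ≤ r) :
    ((Tmin d r).ncard : ℝ) ≤ (3*r)^(2*d) := by
  have h1 : (Tmin d r).ncard ≤ (box d r ×ˢ box d r).card := by
    rw [← Set.ncard_image_of_injOn (injOn_pick d r)]
    rw [← Set.ncard_coe_finset]
    apply Set.ncard_le_ncard _ (box d r ×ˢ box d r).finite_toSet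
    rintro q ⟨s, hs, rfl⟩
    exact pick_mem_box hs
  have hbox : (box d r).card = ((2*⌈r⌉+1).toNat)^d := by
    rw [box, Fintype.card_piFinset]
    rw [Finset.prod_const, Int.card_Icc]
    congr 1
    · congr 1; ring
    · simp
  have hr' : (0:ℝ) < r := by linarith
  have hceil : ((2*⌈r⌉+1).toNat : ℝ) ≤ 3*r := by
    have h2 : (0:ℤ) ≤ 2*⌈r⌉+1 := by
      have : (1:ℤ) ≤ ⌈r⌉ := by
        rw [Int.le_ceil_iff]
        norm_num; linarith
      omega
    rw [← Int.cast_natCast, Int.toNat_of_nonneg h2]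
    push_cast
    have h3 : (⌈r⌉:ℝ) < r + 1 := Int.ceil_lt_add_one r
    linarith
  have hboxR : ((box d r).card : ℝ) ≤ (3*r)^d := by
    rw [hbox]
    push_cast
    exact pow_le_pow_left₀ (by positivity) hceil d
  have h2 : (((box d r ×ˢ box d r).card : ℕ) : ℝ) ≤ (3*r)^(2*d) := by
    rw [Finset.card_product]
    push_cast
    have : (3*r)^(2*d) = (3*r)^d * (3*r)^d := by rw [two_mul, pow_add]
    rw [this]
    exact mul_le_mul hboxR hboxR (by positivity) (by positivity)
  exact le_trans (by exact_mod_cast h1) h2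





section lower
variable {d : ℕ}

def i0 (hd : 2 ≤ d) : Fin d := ⟨0, by omega⟩
def i1 (hd : 2 ≤ d) : Fin d := ⟨1, by omega⟩

lemma i0_ne_i1 (hd : 2 ≤ d) : i0 hd ≠ i1 hd := by
  simp [i0, i1, Fin.ext_iff]

def zfun (hd : 2 ≤ d) (a b : ℤ) (w : Fin d → ℤ) : Fin d → ℤ :=
  fun i => if i = i0 hd then a else if i = i1 hd then b else w i

lemma zfun_i0 (hd : 2 ≤ d) (a b : ℤ) (w : Fin d → ℤ) : zfun hd a b w (i0 hd) = a := by
  simp [zfun]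

lemma zfun_i1 (hd : 2 ≤ d) (a b : ℤ) (w : Fin d → ℤ) : zfun hd a b w (i1 hd) = b := by
  simp [zfun, (i0_ne_i1 hd).symm, i0, i1, Fin.ext_iff]

lemma zfun_other (hd : 2 ≤ d) (a b : ℤ) (w : Fin d → ℤ) (i : Fin d) (h0 : i ≠ i0 hd)
    (h1 : i ≠ i1 hd) : zfun hd a b w i = w i := by
  simp [zfun, h0, h1]

noncomputable def Wfin (hd : 2 ≤ d) (n : ℕ) : Finset (Fin d → ℤ) :=
  Fintype.piFinset fun i => if (i:ℕ) < 2 then ({0} : Finset ℤ) else Finset.Ioc (0:ℤ) (n:ℤ)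

noncomputable def Yfin (d : ℕ) (n : ℕ) : Finset (Fin d → ℤ) :=
  Fintype.piFinset fun _ => Finset.Ico (0:ℤ) (n:ℤ)

noncomputable def Param (hd : 2 ≤ d) (n : ℕ) : Finset ((ℤ × ℤ) × (Fin d → ℤ) × (Fin d → ℤ)) :=
  Cfin n ×ˢ (Wfin hd n ×ˢ Yfin d n)

def gmap (hd : 2 ≤ d) (p : (ℤ × ℤ) × (Fin d → ℤ) × (Fin d → ℤ)) :
    Set (EuclideanSpace ℝ (Fin d)) :=
  {P | ∃ t : ℝ, P = L d p.2.2 + t • L d (zfun hd p.1.1 p.1.2 p.2.1)}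

-- membership facts
lemma param_facts (hd : 2 ≤ d) {n : ℕ} {p : (ℤ × ℤ) × (Fin d → ℤ) × (Fin d → ℤ)}
    (hp : p ∈ Param hd n) :
    ((n:ℤ) < p.1.1 ∧ p.1.1 ≤ 2*n) ∧ (0 < p.1.2 ∧ p.1.2 ≤ n) ∧ Int.gcd p.1.1 p.1.2 = 1 ∧
    (∀ i : Fin d, (i:ℕ) < 2 → p.2.1 i = 0) ∧ (∀ i : Fin d, 0 ≤ p.2.1 i ∧ p.2.1 i ≤ n) ∧
    (∀ i : Fin d, 0 ≤ p.2.2 i ∧ p.2.2 i < n) := by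
  rw [Param, Finset.mem_product, Finset.mem_product] at hp
  obtain ⟨hC, hW, hY⟩ := hp
  rw [Cfin, Finset.mem_filter, Finset.mem_product, Finset.mem_Ioc, Finset.mem_Ioc] at hC
  rw [Wfin, Fintype.mem_piFinset] at hW
  rw [Yfin, Fintype.mem_piFinset] at hY
  refine ⟨hC.1.1, hC.1.2, hC.2, ?_, ?_, ?_⟩
  · intro i hi
    have := hW i
    rw [if_pos hi] at this
    simpa using this
  · intro i
    have := hW i
    by_cases hi : (i:ℕ) < 2
    · rw [if_pos hi] at this
      simp at this
      omega
    · rw [if_neg hi, Finset.mem_Ioc] at this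
      omega
  · intro i
    have := hY i
    rw [Finset.mem_Ico] at this
    exact this

-- the z vector is bounded and nonzero
lemma gmap_mem (hd : 2 ≤ d) {n : ℕ} {r : ℝ} (hrn : 3*(d:ℝ)*(n:ℕ) ≤ r)
    {p : (ℤ × ℤ) × (Fin d → ℤ) × (Fin d → ℤ)} (hp : p ∈ Param hd n) :
    gmap hd p ∈ Tmin d r := by
  obtain ⟨⟨ha1, ha2⟩, ⟨hb1, hb2⟩, hgcd, hw2, hwb, hyb⟩ := param_facts hd hp
  set a := p.1.1
  set b := p.1.2
  set w := p.2.1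
  set y := p.2.2
  set z := zfun hd a b w with hz
  have hn0 : (0:ℤ) ≤ (n:ℤ) := by positivity
  have hzne : z ≠ 0 := by
    intro h
    have := congrFun h (i0 hd)
    rw [hz, zfun_i0] at this
    simp at this
    omega
  refine ⟨L d y, z, hzne, rfl, y, y + z, ?_, ⟨0, by rw [zero_smul, add_zero]⟩,
    ⟨1, by rw [L_add, one_smul]⟩, ?_, ?_⟩
  · intro h
    have := congrFun h (i0 hd)
    simp only [Pi.add_apply] at this
    rw [hz, zfun_i0] at this
    omega
  · have h1 := norm_L_le d y n (by positivity) ?_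
    · calc ‖L d y‖ ≤ d * n := h1
        _ ≤ r := by nlinarith [Nat.cast_nonneg (α := ℝ) d, Nat.cast_nonneg (α := ℝ) n]
    · intro i
      have := hyb i
      rw [abs_le]
      constructor <;> [exact_mod_cast (by omega : -(n:ℤ) ≤ y i); exact_mod_cast (by omega : y i ≤ (n:ℤ))]
  · have h1 := norm_L_le d (y + z) (3*n) (by positivity) ?_
    · calc ‖L d (y+z)‖ ≤ d * (3*n) := h1
        _ = 3*(d:ℝ)*n := by ring
        _ ≤ r := hrn
    · intro i
      have hyi := hyb i
      have hzi : 0 ≤ z i ∧ z i ≤ 2*n := by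
        by_cases h0 : i = i0 hd
        · rw [hz, h0, zfun_i0]; omega
        · by_cases h1 : i = i1 hd
          · rw [hz, h1, zfun_i1]; omega
          · rw [hz, zfun_other hd a b w i h0 h1]
            have := hwb i
            omega
      simp only [Pi.add_apply]
      rw [abs_le]
      constructor
      · exact_mod_cast (by omega : -(3*(n:ℤ)) ≤ y i + z i)
      · exact_mod_cast (by omega : y i + z i ≤ 3*(n:ℤ))
end lower

section lower2
variable {d : ℕ}

lemma coord_eq (d : ℕ) {A B : EuclideanSpace ℝ (Fin d)} {t : ℝ} {C : EuclideanSpace ℝ (Fin d)}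
    (h : A = B + t • C) (i : Fin d) : A i = B i + t * C i := by
  rw [h]
  simp [PiLp.add_apply, PiLp.smul_apply, smul_eq_mul]

lemma gmap_injOn (hd : 2 ≤ d) (n : ℕ) (hn : 50 ≤ n) :
    Set.InjOn (gmap hd) ((Param hd n : Finset _) : Set ((ℤ × ℤ) × (Fin d → ℤ) × (Fin d → ℤ))) := by
  intro p hp q hq heq
  rw [Finset.mem_coe] at hp hq
  obtain ⟨⟨ha1, ha2⟩, ⟨hb1, hb2⟩, hgcd, hw2, hwb, hyb⟩ := param_facts hd hp
  obtain ⟨⟨ha1', ha2'⟩, ⟨hb1', hb2'⟩, hgcd', hw2', hwb', hyb'⟩ := param_facts hd hq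
  set a := p.1.1 with hadef
  set b := p.1.2 with hbdef
  set w := p.2.1 with hwdef
  set y := p.2.2 with hydef
  set a' := q.1.1 with hadef'
  set b' := q.1.2 with hbdef'
  set w' := q.2.1 with hwdef'
  set y' := q.2.2 with hydef'
  set z := zfun hd a b w with hzdef
  set z' := zfun hd a' b' w' with hzdef'
  have ha0 : (0:ℤ) < a := lt_of_le_of_lt (by positivity) ha1
  have ha0' : (0:ℤ) < a' := lt_of_le_of_lt (by positivity) ha1'
  have haR : ((a:ℤ):ℝ) ≠ 0 := by exact_mod_cast ha0.ne'
  -- L y' lies on the line of p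
  have hy'mem : L d y' ∈ gmap hd p := by
    rw [heq]
    exact ⟨0, by rw [zero_smul, add_zero]⟩
  obtain ⟨t, ht⟩ := hy'mem
  have hco : ∀ i, ((y' i : ℤ):ℝ) = ((y i : ℤ):ℝ) + t * ((z i : ℤ):ℝ) := fun i => coord_eq d ht i
  -- L (y' + z') lies on the line of p
  have hy'z'mem : L d (y' + z') ∈ gmap hd p := by
    rw [heq]
    exact ⟨1, by rw [L_add, one_smul]⟩
  obtain ⟨t₂, ht₂⟩ := hy'z'mem
  have hco2 : ∀ i, ((y' i : ℤ):ℝ) + ((z' i : ℤ):ℝ) = ((y i : ℤ):ℝ) + t₂ * ((z i : ℤ):ℝ) := by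
    intro i
    have h := coord_eq d ht₂ i
    rw [L_add] at h
    simpa [PiLp.add_apply, L_app] using h
  -- z' = u • z with u = t₂ - t
  have hzz : ∀ i, ((z' i : ℤ):ℝ) = (t₂ - t) * ((z i : ℤ):ℝ) := by
    intro i
    have h1 := hco i
    have h2 := hco2 i
    nlinarith [h1, h2]
  set u := t₂ - t with hudef
  have hA' : ((a':ℤ):ℝ) = u * ((a:ℤ):ℝ) := by
    have := hzz (i0 hd)
    rwa [hzdef, hzdef', zfun_i0, zfun_i0] at this
  have hB' : ((b':ℤ):ℝ) = u * ((b:ℤ):ℝ) := by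
    have := hzz (i1 hd)
    rwa [hzdef, hzdef', zfun_i1, zfun_i1] at this
  have hab : a' * b = a * b' := by
    have : ((a':ℤ):ℝ) * ((b:ℤ):ℝ) = ((a:ℤ):ℝ) * ((b':ℤ):ℝ) := by
      rw [hA', hB']
      ring
    exact_mod_cast this
  have hcop : IsCoprime (a:ℤ) b := Int.isCoprime_iff_gcd_eq_one.mpr hgcd
  have hcop' : IsCoprime (a':ℤ) b' := Int.isCoprime_iff_gcd_eq_one.mpr hgcd'
  have hdvd1 : a ∣ a' := hcop.dvd_of_dvd_mul_right ⟨b', hab⟩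
  have hdvd2 : a' ∣ a := hcop'.dvd_of_dvd_mul_right ⟨b, hab.symm⟩
  have haa : a = a' := Int.dvd_antisymm ha0.le ha0'.le hdvd1 hdvd2
  have hu1 : u = 1 := by
    have h5 : u * ((a:ℤ):ℝ) = 1 * ((a:ℤ):ℝ) := by
      rw [one_mul, ← hA', haa]
    exact mul_right_cancel₀ haR h5
  have hzz' : z' = z := by
    funext i
    have := hzz i
    rw [hu1, one_mul] at this
    exact_mod_cast this
  -- components of z equal
  have hbb : b = b' := by
    have h1 := congrFun hzz' (i1 hd)
    rw [hzdef, hzdef', zfun_i1, zfun_i1] at h1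
    exact h1.symm
  have hww : w = w' := by
    funext i
    by_cases h2 : (i:ℕ) < 2
    · rw [hw2 i h2, hw2' i h2]
    · have h0 : i ≠ i0 hd := by
        intro h
        rw [h] at h2
        exact h2 (by simp [i0])
      have h1 : i ≠ i1 hd := by
        intro h
        rw [h] at h2
        exact h2 (by simp [i1])
      have := congrFun hzz' i
      rw [hzdef, hzdef', zfun_other hd a b w i h0 h1, zfun_other hd a' b' w' i h0 h1] at this
      exact this.symm
  -- now y = y'
  have hsR : ((y' (i0 hd) : ℤ):ℝ) - ((y (i0 hd) : ℤ):ℝ) = t * ((a:ℤ):ℝ) := by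
    have h := hco (i0 hd)
    rw [hzdef, zfun_i0] at h
    linarith
  have hs2 : (a:ℤ) * (y' (i1 hd) - y (i1 hd)) = (y' (i0 hd) - y (i0 hd)) * b := by
    have h1 := hco (i1 hd)
    rw [hzdef, zfun_i1] at h1
    have h3 : ((y' (i1 hd):ℤ):ℝ) - ((y (i1 hd):ℤ):ℝ) = t * ((b:ℤ):ℝ) := by linarith
    have h4 : ((a:ℤ):ℝ) * (((y' (i1 hd):ℤ):ℝ) - ((y (i1 hd):ℤ):ℝ))
        = (((y' (i0 hd):ℤ):ℝ) - ((y (i0 hd):ℤ):ℝ)) * ((b:ℤ):ℝ) := by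
      rw [h3, hsR]
      ring
    exact_mod_cast h4
  have hdvds : a ∣ (y' (i0 hd) - y (i0 hd)) :=
    hcop.dvd_of_dvd_mul_right ⟨y' (i1 hd) - y (i1 hd), hs2.symm⟩
  have hsbound : |y' (i0 hd) - y (i0 hd)| < a := by
    have h1 := hyb (i0 hd)
    have h2 := hyb' (i0 hd)
    rw [abs_lt]
    omega
  have hs0 : y' (i0 hd) - y (i0 hd) = 0 := Int.eq_zero_of_abs_lt_dvd hdvds hsbound
  have ht0 : t = 0 := by
    have h5 : ((y' (i0 hd):ℤ):ℝ) - ((y (i0 hd):ℤ):ℝ) = 0 := by exact_mod_cast hs0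
    have h6 : t * ((a:ℤ):ℝ) = 0 := by linarith
    rcases mul_eq_zero.mp h6 with h | h
    · exact h
    · exact absurd h haR
  have hyy : y = y' := by
    funext i
    have := hco i
    rw [ht0, zero_mul, add_zero] at this
    exact_mod_cast this.symm
  -- assemble
  have h1 : p.1 = q.1 := Prod.ext haa hbb
  have h2 : p.2 = q.2 := Prod.ext hww hyy
  exact Prod.ext h1 h2

end lower2

section lower3
variable {d : ℕ}

lemma Yfin_card (d n : ℕ) : (Yfin d n).card = n^d := by
  rw [Yfin, Fintype.card_piFinset]
  rw [Finset.prod_const, Int.card_Ico]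
  simp

lemma Wfin_card (hd : 2 ≤ d) (n : ℕ) : (Wfin hd n).card = n^(d-2) := by
  rw [Wfin, Fintype.card_piFinset]
  have h1 : ∀ i : Fin d, ((if (i:ℕ) < 2 then ({0}:Finset ℤ) else Finset.Ioc (0:ℤ) (n:ℤ))).card
      = if (i:ℕ) < 2 then 1 else n := by
    intro i
    split
    · simp
    · rw [Int.card_Ioc]; simp
  rw [Finset.prod_congr rfl (fun i _ => h1 i)]
  rw [Finset.prod_ite (fun _ => (1:ℕ)) (fun _ => n)]
  rw [Finset.prod_const_one, Finset.prod_const, one_mul]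
  congr 1
  have hfilter : Finset.univ.filter (fun i : Fin d => (i:ℕ) < 2) = {i0 hd, i1 hd} := by
    ext i
    simp only [Finset.mem_filter, Finset.mem_univ, true_and, Finset.mem_insert,
      Finset.mem_singleton, i0, i1, Fin.ext_iff]
    omega
  have hc2 : (Finset.univ.filter (fun i : Fin d => (i:ℕ) < 2)).card = 2 := by
    rw [hfilter]
    rw [Finset.card_insert_of_notMem (by simp [i0, i1, Fin.ext_iff]), Finset.card_singleton]
  have := Finset.card_filter_add_card_filter_not (s := (Finset.univ : Finset (Fin d)))
    (p := fun i : Fin d => (i:ℕ) < 2)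
  rw [hc2] at this
  simp only [Finset.card_univ, Fintype.card_fin] at this
  omega

lemma Tmin_ncard_ge (hd : 2 ≤ d) (n : ℕ) (hn : 50 ≤ n) (r : ℝ) (hrn : 3*(d:ℝ)*(n:ℕ) ≤ r) :
    (0.1:ℝ) * (n:ℝ)^(2*d) ≤ ((Tmin d r).ncard : ℝ) := by
  have h1 : ((gmap hd) '' ((Param hd n : Finset _) : Set _)).ncard = (Param hd n).card := by
    rw [Set.ncard_image_of_injOn (gmap_injOn hd n hn), Set.ncard_coe_finset]
  have h2 : ((gmap hd) '' ((Param hd n : Finset _) : Set _)).ncard ≤ (Tmin d r).ncard := by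
    apply Set.ncard_le_ncard _ (Tmin_finite d r)
    rintro s ⟨p, hp, rfl⟩
    exact gmap_mem hd hrn (Finset.mem_coe.mp hp)
  have h3 : (Param hd n).card = (Cfin n).card * (n^(d-2) * n^d) := by
    rw [Param, Finset.card_product, Finset.card_product, Wfin_card hd, Yfin_card]
  have h4 : (0.1:ℝ) * (n:ℝ)^(2*d) ≤ ((Param hd n).card : ℝ) := by
    rw [h3]
    push_cast
    have h5 := Cfin_card n hn
    have h6 : (n:ℝ)^(2*d) = (n:ℝ)^2 * ((n:ℝ)^(d-2) * (n:ℝ)^d) := by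
      rw [← pow_add, ← pow_add]
      congr 1
      omega
    rw [h6, ← mul_assoc]
    calc (0.1:ℝ) * (n:ℝ)^2 * ((n:ℝ)^(d-2) * (n:ℝ)^d)
        ≤ ((Cfin n).card : ℝ) * ((n:ℝ)^(d-2) * (n:ℝ)^d) := by
          apply mul_le_mul_of_nonneg_right h5 (by positivity)
      _ = ((Cfin n).card : ℝ) * ((n:ℝ)^(d-2) * (n:ℝ)^d) := rfl
  calc (0.1:ℝ) * (n:ℝ)^(2*d) ≤ ((Param hd n).card : ℝ) := h4
    _ ≤ ((Tmin d r).ncard : ℝ) := by exact_mod_cast h1 ▸ h2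

end lower3


theorem stmt14 (d : ℕ) (hd : 2 ≤ d) :
    ∃ C₁ C₂ : ℝ, 0 < C₁ ∧ 0 < C₂ ∧ ∃ R : ℝ, ∀ r : ℝ, R ≤ r →
      C₁ * r ^ (2 * d) < ((Tmin d r).ncard : ℝ) ∧
      ((Tmin d r).ncard : ℝ) < C₂ * r ^ (2 * d) := by
  have hd0 : (0:ℝ) < (d:ℝ) := by exact_mod_cast (by omega : 0 < d)
  refine ⟨0.05 * ((6*(d:ℝ))⁻¹)^(2*d), 9^d + 1, by positivity, by positivity, 200*(d:ℝ), ?_⟩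
  intro r hr
  have hr400 : (400:ℝ) ≤ r := by
    have : (400:ℝ) ≤ 200*(d:ℝ) := by
      have : (2:ℝ) ≤ (d:ℝ) := by exact_mod_cast hd
      linarith
    linarith
  have hr0 : (0:ℝ) < r := by linarith
  set n : ℕ := ⌊r/(3*(d:ℝ))⌋₊ with hndef
  have hdiv_pos : (0:ℝ) < 3*(d:ℝ) := by linarith
  have h50 : (50:ℝ) ≤ r/(3*(d:ℝ)) := by
    rw [le_div_iff₀ hdiv_pos]
    have : (2:ℝ) ≤ (d:ℝ) := by exact_mod_cast hd
    nlinarith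
  have hn : 50 ≤ n := Nat.le_floor (by exact_mod_cast h50)
  have hfloor_le : (n:ℝ) ≤ r/(3*(d:ℝ)) := Nat.floor_le (by positivity)
  have hrn : 3*(d:ℝ)*(n:ℕ) ≤ r := by
    rw [le_div_iff₀ hdiv_pos] at hfloor_le
    linarith
  have hfloor_gt : r/(3*(d:ℝ)) < (n:ℝ) + 1 := Nat.lt_floor_add_one _
  have hn_ge : r/(6*(d:ℝ)) ≤ (n:ℝ) := by
    have h6 : (1:ℝ) ≤ r/(6*(d:ℝ)) := by
      rw [le_div_iff₀ (by linarith)]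
      have : (2:ℝ) ≤ (d:ℝ) := by exact_mod_cast hd
      nlinarith
    have heq : r/(3*(d:ℝ)) = 2 * (r/(6*(d:ℝ))) := by
      field_simp
      ring
    rw [heq] at hfloor_gt
    linarith
  constructor
  · -- lower bound
    have hlow := Tmin_ncard_ge hd n hn r hrn
    have hXpos : (0:ℝ) < (r/(6*(d:ℝ)))^(2*d) := by positivity
    have hpow : (r/(6*(d:ℝ)))^(2*d) ≤ (n:ℝ)^(2*d) :=
      pow_le_pow_left₀ (by positivity) hn_ge (2*d)
    have heq1 : 0.05 * ((6*(d:ℝ))⁻¹)^(2*d) * r^(2*d) = 0.05 * (r/(6*(d:ℝ)))^(2*d) := by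
      rw [div_eq_mul_inv, mul_pow]
      ring
    rw [heq1]
    calc 0.05 * (r/(6*(d:ℝ)))^(2*d) < 0.1 * (r/(6*(d:ℝ)))^(2*d) := by nlinarith
      _ ≤ 0.1 * (n:ℝ)^(2*d) := by nlinarith
      _ ≤ ((Tmin d r).ncard : ℝ) := hlow
  · -- upper bound
    have hup := Tmin_ncard_le d r (by linarith)
    have heq2 : (3*r)^(2*d) = 9^d * r^(2*d) := by
      rw [mul_pow, pow_mul]
      norm_num
    have hrp : (0:ℝ) < r^(2*d) := by positivity
    calc ((Tmin d r).ncard : ℝ) ≤ (3*r)^(2*d) := hup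
      _ = 9^d * r^(2*d) := heq2
      _ < (9^d + 1) * r^(2*d) := by nlinarith
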